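/- Let p ≠ 0 be a real number and define σ : ℝ → ℝ by σ(r) ≔ −(r² + p²)/(4p). If β : ℝ → ℝ is twice continuously differentiable and satisfies σ(r)·β''(r) + σ'(r)·β'(r) + β(r)/(4·σ(r)) = 0 for all r ∈ ℝ, then there exist unique real numbers k₁ and k₂ such that β(r) = k₁·(p² − r²)/(r² + p²) + k₂·r/(r² + p²) for all r ∈ ℝ. -/

import Mathlib

open Set Real

/-- The function `σ(r) = −(r² + p²)/(4p)` (with `p ≠ 0`). -/
noncomputable def sigmaFun (p : ℝ) : ℝ → ℝ := fun r => -(r ^ 2 + p ^ 2) / (4 * p)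

section Aux

variable (p : ℝ)

/-- The candidate solution. -/
noncomputable def solFun (k₁ k₂ : ℝ) : ℝ → ℝ :=
  fun r => k₁ * (p ^ 2 - r ^ 2) / (r ^ 2 + p ^ 2) + k₂ * r / (r ^ 2 + p ^ 2)

/-- Its derivative. -/
noncomputable def solFun' (k₁ k₂ : ℝ) : ℝ → ℝ :=
  fun r => (k₁ * (-4 * p ^ 2) * r + k₂ * (p ^ 2 - r ^ 2)) / (r ^ 2 + p ^ 2) ^ 2

/-- Its second derivative. -/
noncomputable def solFun'' (k₁ k₂ : ℝ) : ℝ → ℝ :=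
  fun r => (k₁ * (4 * p ^ 2 * (3 * r ^ 2 - p ^ 2)) + k₂ * (2 * r * (r ^ 2 - 3 * p ^ 2)))
    / (r ^ 2 + p ^ 2) ^ 3

variable {p}

lemma solFun_hasDerivAt (hp : p ≠ 0) (k₁ k₂ : ℝ) (r : ℝ) :
    HasDerivAt (solFun p k₁ k₂) (solFun' p k₁ k₂ r) r := by
  have hd : r ^ 2 + p ^ 2 ≠ 0 := by positivity
  have hden : HasDerivAt (fun r : ℝ => r ^ 2 + p ^ 2) (2 * r) r := by
    simpa using (hasDerivAt_pow 2 r).add_const (p ^ 2)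
  have h1 : HasDerivAt (fun r : ℝ => k₁ * (p ^ 2 - r ^ 2)) (k₁ * (-(2 * r))) r := by
    have : HasDerivAt (fun r : ℝ => p ^ 2 - r ^ 2) (-(2 * r)) r := by
      simpa using (hasDerivAt_pow 2 r).const_sub (p ^ 2)
    exact this.const_mul k₁
  have h2 : HasDerivAt (fun r : ℝ => k₂ * r) k₂ r := by
    simpa using (hasDerivAt_id r).const_mul k₂
  have := (h1.fun_div hden hd).fun_add (h2.fun_div hden hd)
  refine this.congr_deriv ?_
  simp only [solFun']
  field_simp
  ring

lemma solFun'_hasDerivAt (hp : p ≠ 0) (k₁ k₂ : ℝ) (r : ℝ) :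
    HasDerivAt (solFun' p k₁ k₂) (solFun'' p k₁ k₂ r) r := by
  have hd : r ^ 2 + p ^ 2 ≠ 0 := by positivity
  have hd2 : (r ^ 2 + p ^ 2) ^ 2 ≠ 0 := pow_ne_zero _ hd
  have hden : HasDerivAt (fun r : ℝ => r ^ 2 + p ^ 2) (2 * r) r := by
    simpa using (hasDerivAt_pow 2 r).add_const (p ^ 2)
  have hden2 : HasDerivAt (fun r : ℝ => (r ^ 2 + p ^ 2) ^ 2)
      (2 * (r ^ 2 + p ^ 2) ^ 1 * (2 * r)) r := by
    simpa using hden.fun_pow 2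
  have h1 : HasDerivAt (fun r : ℝ => k₁ * (-4 * p ^ 2) * r + k₂ * (p ^ 2 - r ^ 2))
      (k₁ * (-4 * p ^ 2) + k₂ * (-(2 * r))) r := by
    have ha : HasDerivAt (fun r : ℝ => k₁ * (-4 * p ^ 2) * r) (k₁ * (-4 * p ^ 2)) r := by
      have h0 := (hasDerivAt_id r).const_mul (k₁ * (-4 * p ^ 2))
      rw [mul_one] at h0
      exact h0
    have hb : HasDerivAt (fun r : ℝ => k₂ * (p ^ 2 - r ^ 2)) (k₂ * (-(2 * r))) r := by
      have : HasDerivAt (fun r : ℝ => p ^ 2 - r ^ 2) (-(2 * r)) r := by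
        simpa using (hasDerivAt_pow 2 r).const_sub (p ^ 2)
      exact this.const_mul k₂
    exact ha.add hb
  have := h1.fun_div hden2 hd2
  refine this.congr_deriv ?_
  simp only [solFun'']
  field_simp
  ring

end Aux

/-- Every `C²` solution `β` of `σβ'' + σ'β' + β/(4σ) = 0` with `σ(r) = −(r² + p²)/(4p)`,
`p ≠ 0`, is of the form `β(r) = k₁(p² − r²)/(r² + p²) + k₂ r/(r² + p²)` for unique
real numbers `k₁, k₂`. -/
theorem ode_solutions_unique_form (p : ℝ) (hp : p ≠ 0)
    (β : ℝ → ℝ) (hβ : ContDiff ℝ 2 β)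
    (h : ∀ r : ℝ, sigmaFun p r * deriv (deriv β) r + deriv (sigmaFun p) r * deriv β r +
      β r / (4 * sigmaFun p r) = 0) :
    ∃! k : ℝ × ℝ, ∀ r : ℝ,
      β r = k.1 * (p ^ 2 - r ^ 2) / (r ^ 2 + p ^ 2) + k.2 * r / (r ^ 2 + p ^ 2) := by
  have hp2 : (0:ℝ) < p ^ 2 := by positivity
  -- coefficient functions
  set a : ℝ → ℝ := fun t => -4 * p ^ 2 / (t ^ 2 + p ^ 2) ^ 2 with ha_def
  set b : ℝ → ℝ := fun t => -2 * t / (t ^ 2 + p ^ 2) with hb_def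
  -- derivative of sigma
  have hσ : ∀ r : ℝ, deriv (sigmaFun p) r = -r / (2 * p) := by
    intro r
    have h1 : HasDerivAt (sigmaFun p) (-r / (2 * p)) r := by
      have h2 : HasDerivAt (fun r : ℝ => -(r ^ 2 + p ^ 2) / (4 * p))
          (-(2 * r ^ 1) / (4 * p)) r := by
        exact (((hasDerivAt_pow 2 r).add_const _).neg).div_const _
      have : HasDerivAt (sigmaFun p) (-(2 * r ^ 1) / (4 * p)) r := h2
      convert this using 1
      field_simp
      ring
    exact h1.deriv
  -- regularity of β
  have hβ1 : Differentiable ℝ β := hβ.differentiable (by norm_num)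
  have hβd : ContDiff ℝ 1 (deriv β) := by
    have h2 : ContDiff ℝ ((1:ℕ∞)+1) β := by exact_mod_cast hβ
    exact (contDiff_succ_iff_deriv.mp h2).2.2
  have hβd1 : Differentiable ℝ (deriv β) := hβd.differentiable (by norm_num)
  -- the cleaned ODE
  have hode : ∀ r : ℝ, deriv (deriv β) r = a r * β r + b r * deriv β r := by
    intro r
    have h0 := h r
    rw [hσ r] at h0
    simp only [sigmaFun] at h0
    set A := β r
    set B := deriv β r
    set C := deriv (deriv β) r
    have hd : r ^ 2 + p ^ 2 ≠ 0 := by positivity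
    have hd2 : (4:ℝ) * (-(r ^ 2 + p ^ 2) / (4 * p)) ≠ 0 :=
      mul_ne_zero (by norm_num) (div_ne_zero (neg_ne_zero.mpr hd) (by simpa using hp))
    have e : A / (4 * (-(r ^ 2 + p ^ 2) / (4 * p))) = -p * A / (r ^ 2 + p ^ 2) := by
      rw [div_eq_div_iff hd2 hd]
      field_simp
    rw [e] at h0
    have key : (r ^ 2 + p ^ 2) ^ 2 * C + 2 * r * (r ^ 2 + p ^ 2) * B + 4 * p ^ 2 * A = 0 := by
      field_simp at h0
      have h2 : (-2 * p) * ((r ^ 2 + p ^ 2) ^ 2 * C + 2 * r * (r ^ 2 + p ^ 2) * B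
          + 4 * p ^ 2 * A) = 0 := by linear_combination p * h0
      rcases mul_eq_zero.mp h2 with h3 | h3
      · exact absurd h3 (by simp [hp])
      · exact h3
    show C = a r * A + b r * B
    rw [ha_def, hb_def]
    field_simp
    linear_combination key
  -- the candidate constants
  set k₁ : ℝ := β 0 with hk₁
  set k₂ : ℝ := p ^ 2 * deriv β 0 with hk₂
  set u := solFun p k₁ k₂ with hu_def
  set u' := solFun' p k₁ k₂ with hu'_def
  have hu' : ∀ r, HasDerivAt u (u' r) r := solFun_hasDerivAt hp k₁ k₂
  have hu'' : ∀ r, HasDerivAt u' (solFun'' p k₁ k₂ r) r := solFun'_hasDerivAt hp k₁ k₂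
  have hu_ode : ∀ r : ℝ, solFun'' p k₁ k₂ r = a r * u r + b r * u' r := by
    intro r
    have hd : r ^ 2 + p ^ 2 ≠ 0 := by positivity
    rw [hu_def, hu'_def, ha_def, hb_def]
    simp only [solFun, solFun', solFun'']
    field_simp
    ring
  -- the system
  set v : ℝ → ℝ × ℝ → ℝ × ℝ := fun t x => (x.2, a t * x.1 + b t * x.2) with hv_def
  set K : NNReal := ⟨1 + 4 / p ^ 2 + 1 / |p|, by positivity⟩ with hK_def
  have hKcoe : (K : ℝ) = 1 + 4 / p ^ 2 + 1 / |p| := rfl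
  have hlip : ∀ t : ℝ, LipschitzWith K (v t) := by
    intro t
    apply LipschitzWith.of_dist_le_mul
    intro x y
    have hd : (0:ℝ) < t ^ 2 + p ^ 2 := by positivity
    have hpabs : (0:ℝ) < |p| := abs_pos.mpr hp
    have hD : (0:ℝ) ≤ dist x y := dist_nonneg
    have hx1 : dist x.1 y.1 ≤ dist x y := by rw [Prod.dist_eq]; exact le_max_left _ _
    have hx2 : dist x.2 y.2 ≤ dist x y := by rw [Prod.dist_eq]; exact le_max_right _ _
    have ha_bd : |a t| ≤ 4 / p ^ 2 := by
      rw [ha_def]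
      rw [abs_div, abs_of_pos (by positivity : (0:ℝ) < (t ^ 2 + p ^ 2) ^ 2)]
      rw [div_le_div_iff₀ (by positivity) hp2]
      have h1 : |(-4:ℝ) * p ^ 2| = 4 * p ^ 2 := by
        rw [abs_mul]
        simp [abs_of_pos hp2]
      rw [h1]
      nlinarith [sq_nonneg t, sq_nonneg (t * p), sq_nonneg (t ^ 2)]
    have hb_bd : |b t| ≤ 1 / |p| := by
      rw [hb_def]
      rw [abs_div, abs_of_pos hd]
      rw [div_le_div_iff₀ hd hpabs]
      have h1 : |(-2:ℝ) * t| = 2 * |t| := by rw [abs_mul]; simp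
      rw [h1]
      nlinarith [sq_nonneg (|t| - |p|), sq_abs t, sq_abs p]
    rw [Prod.dist_eq]
    apply max_le
    · show dist x.2 y.2 ≤ (K:ℝ) * dist x y
      rw [hKcoe]
      have hn1 : (0:ℝ) ≤ 4 / p ^ 2 * dist x y := by positivity
      have hn2 : (0:ℝ) ≤ 1 / |p| * dist x y := by positivity
      nlinarith [hx2]
    · show dist (a t * x.1 + b t * x.2) (a t * y.1 + b t * y.2) ≤ (K:ℝ) * dist x y
      rw [Real.dist_eq] at *
      have e1 : a t * x.1 + b t * x.2 - (a t * y.1 + b t * y.2)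
          = a t * (x.1 - y.1) + b t * (x.2 - y.2) := by ring
      rw [e1, hKcoe]
      calc |a t * (x.1 - y.1) + b t * (x.2 - y.2)|
          ≤ |a t * (x.1 - y.1)| + |b t * (x.2 - y.2)| := abs_add_le _ _
        _ = |a t| * |x.1 - y.1| + |b t| * |x.2 - y.2| := by rw [abs_mul, abs_mul]
        _ ≤ (4 / p ^ 2) * dist x y + (1 / |p|) * dist x y := by
            apply add_le_add
            · exact mul_le_mul ha_bd hx1 (abs_nonneg _) (by positivity)
            · exact mul_le_mul hb_bd hx2 (abs_nonneg _) (by positivity)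
        _ ≤ (1 + 4 / p ^ 2 + 1 / |p|) * dist x y := by nlinarith [hD]
  -- the two trajectories
  set F : ℝ → ℝ × ℝ := fun t => (β t, deriv β t) with hF_def
  set G : ℝ → ℝ × ℝ := fun t => (u t, u' t) with hG_def
  have hF' : ∀ t : ℝ, HasDerivAt F (v t (F t)) t := by
    intro t
    have h1 : HasDerivAt β (deriv β t) t := (hβ1 t).hasDerivAt
    have h2 : HasDerivAt (deriv β) (deriv (deriv β) t) t := (hβd1 t).hasDerivAt
    have := h1.prodMk h2
    rw [hode t] at this
    exact this
  have hG' : ∀ t : ℝ, HasDerivAt G (v t (G t)) t := by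
    intro t
    have := (hu' t).prodMk (hu'' t)
    rw [hu_ode t] at this
    exact this
  have heq0 : F 0 = G 0 := by
    rw [hF_def, hG_def, hu_def, hu'_def]
    simp only [solFun, solFun']
    have : (0:ℝ) ^ 2 + p ^ 2 = p ^ 2 := by ring
    rw [Prod.mk.injEq]
    constructor
    · rw [hk₁]; field_simp; ring
    · rw [hk₂]; field_simp; ring
  -- main conclusion via uniqueness of ODE solutions
  have main : ∀ r : ℝ, β r = u r := by
    intro r
    have h0mem : (0:ℝ) ∈ Ioo (-(|r| + 1)) (|r| + 1) := by
      constructor <;> [linarith [abs_nonneg r]; linarith [abs_nonneg r]]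
    have hrmem : r ∈ Icc (-(|r| + 1)) (|r| + 1) := by
      constructor <;> [linarith [neg_abs_le r]; linarith [le_abs_self r]]
    have hFG : EqOn F G (Icc (-(|r| + 1)) (|r| + 1)) := by
      apply ODE_solution_unique_of_mem_Icc
        (s := fun _ => (univ : Set (ℝ × ℝ))) (fun t _ => (hlip t).lipschitzOnWith)
        h0mem
      · exact ((hβ1.continuous.prodMk hβd1.continuous)).continuousOn
      · exact fun t _ => hF' t
      · exact fun _ _ => mem_univ _
      · exact (continuousOn_of_forall_continuousAt fun t _ =>
          ((hu' t).continuousAt.prodMk (hu'' t).continuousAt))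
      · exact fun t _ => hG' t
      · exact fun _ _ => mem_univ _
      · exact heq0
    have := hFG hrmem
    have := congrArg Prod.fst this
    simpa [hF_def, hG_def] using this
  refine ⟨(k₁, k₂), fun r => by simpa [hu_def, solFun] using main r, ?_⟩
  rintro ⟨c₁, c₂⟩ hc
  have hmain : ∀ r : ℝ, β r = k₁ * (p ^ 2 - r ^ 2) / (r ^ 2 + p ^ 2) + k₂ * r / (r ^ 2 + p ^ 2) :=
    fun r => by simpa [hu_def, solFun] using main r
  have hc1 : c₁ = k₁ := by
    have h0 := (hc 0).symm.trans (hmain 0)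
    simp only at h0
    have hd0 : (0:ℝ) ^ 2 + p ^ 2 ≠ 0 := by positivity
    field_simp at h0
    exact mul_right_cancel₀ (by simpa using hp) (by linarith [h0] : c₁ * (p ^ 2 - 0 ^ 2) = k₁ * (p ^ 2 - 0 ^ 2))
  subst hc1
  have hc2 : c₂ = k₂ := by
    have hpp := (hc p).symm.trans (hmain p)
    simp only at hpp
    have hdp : p ^ 2 + p ^ 2 ≠ 0 := by positivity
    field_simp at hpp
    linarith [hpp]
  simp [hc2]
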